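/- arXiv:2105.05243 — 8 statements merged into one kernel-verified Lean document; each statement's English description precedes it below -/
import Mathlib

section
/- Let n be a positive integer, let p_1, ..., p_n be reals with 0 < p_i ≤ 1 for each i, let c > 0, and for each i let V_i : ℝ → ℝ be continuous, nondecreasing and concave on [0,1] with V_i(0) = 0. Consider the feasible set D = {α ∈ ℝ^n : 0 ≤ α_i ≤ 1 for all i, and Σ_i α_i ≤ c} and the objective F(α) = Σ_i V_i(max(p_i − α_i, 0)). Then F attains its minimum over D at some point α* ∈ D such that the number of indices i with 0 < α*_i < p_i is at most one. -/
private lemma sum_split_two {n : ℕ} (i j : Fin n) (hij : i ≠ j) (f : Fin n → ℝ) :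
    ∑ k, f k = f i + f j + ∑ k ∈ (Finset.univ.erase i).erase j, f k := by
  rw [← Finset.add_sum_erase _ f (Finset.mem_univ i),
      ← Finset.add_sum_erase _ f (Finset.mem_erase.mpr ⟨hij.symm, Finset.mem_univ j⟩)]
  ring

set_option maxHeartbeats 1000000 in
/-- Lemma 2 ("extreme points" lemma): the minimization of a sum of concave costs of
residual frequencies of pause over the set `{0 ≤ αᵢ ≤ 1, Σαᵢ ≤ c}` has a minimizer
with at most one coordinate strictly between `0` and `pᵢ`. -/
theorem stmt_0 (n : ℕ) (hn : 0 < n) (p : Fin n → ℝ)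
    (hp : ∀ i, 0 < p i ∧ p i ≤ 1) (c : ℝ) (hc : 0 < c)
    (V : Fin n → ℝ → ℝ)
    (hVcont : ∀ i, ContinuousOn (V i) (Set.Icc 0 1))
    (hVmono : ∀ i, MonotoneOn (V i) (Set.Icc 0 1))
    (hVconc : ∀ i, ConcaveOn ℝ (Set.Icc 0 1) (V i))
    (hV0 : ∀ i, V i 0 = 0) :
    ∃ α : Fin n → ℝ,
      ((∀ i, 0 ≤ α i ∧ α i ≤ 1) ∧ ∑ i, α i ≤ c) ∧
      (∀ β : Fin n → ℝ, (∀ i, 0 ≤ β i ∧ β i ≤ 1) → ∑ i, β i ≤ c →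
        ∑ i, V i (max (p i - α i) 0) ≤ ∑ i, V i (max (p i - β i) 0)) ∧
      {i : Fin n | 0 < α i ∧ α i < p i}.ncard ≤ 1 := by
  classical
  set D : Set (Fin n → ℝ) := {α | (∀ i, 0 ≤ α i ∧ α i ≤ 1) ∧ ∑ i, α i ≤ c} with hDdef
  set F : (Fin n → ℝ) → ℝ := fun α => ∑ i, V i (max (p i - α i) 0) with hFdef
  -- compactness of D
  have hDsub : D ⊆ Set.univ.pi fun _ : Fin n => Set.Icc (0:ℝ) 1 := by
    intro α hα k _
    exact ⟨(hα.1 k).1, (hα.1 k).2⟩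
  have hDclosed : IsClosed D := by
    have h1 : D = (⋂ k, (fun α : Fin n → ℝ => α k) ⁻¹' Set.Icc 0 1) ∩
        {α : Fin n → ℝ | ∑ i, α i ≤ c} := by
      ext α
      simp only [hDdef, Set.mem_setOf_eq, Set.mem_inter_iff, Set.mem_iInter,
        Set.mem_preimage, Set.mem_Icc]
    rw [h1]
    exact (isClosed_iInter fun k => isClosed_Icc.preimage (continuous_apply k)).inter
      (isClosed_le (continuous_finset_sum _ fun i _ => continuous_apply i) continuous_const)
  have hDcomp : IsCompact D :=
    (isCompact_univ_pi fun _ => isCompact_Icc).of_isClosed_subset hDclosed hDsub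
  have hDne : D.Nonempty := by
    refine ⟨fun _ => 0, fun i => ⟨le_rfl, zero_le_one⟩, ?_⟩
    simpa using hc.le
  -- continuity of F
  have hFcont : ContinuousOn F D := by
    apply continuousOn_finset_sum
    intro i _
    have hmaps : Set.MapsTo (fun α : Fin n → ℝ => max (p i - α i) 0) D (Set.Icc 0 1) := by
      intro α hα
      refine ⟨le_max_right _ _, max_le ?_ zero_le_one⟩
      have h1 := (hα.1 i).1
      have h2 := (hp i).2
      linarith
    exact (hVcont i).comp
      (((continuous_const.sub (continuous_apply i)).max continuous_const).continuousOn) hmaps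
  obtain ⟨α₀, hα₀D, hα₀min⟩ := hDcomp.exists_isMinOn hDne hFcont
  -- pick a minimizer with minimal number of fractional coordinates
  have hP : ∃ m : ℕ, ∃ α, α ∈ D ∧ IsMinOn F D α ∧
      {i : Fin n | 0 < α i ∧ α i < p i}.ncard = m :=
    ⟨_, α₀, hα₀D, hα₀min, rfl⟩
  obtain ⟨α, hαD, hαmin, hαcard⟩ := Nat.find_spec hP
  refine ⟨α, ⟨hαD.1, hαD.2⟩, ?_, ?_⟩
  · intro β hβ1 hβ2
    exact isMinOn_iff.mp hαmin β ⟨hβ1, hβ2⟩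
  by_contra hcard
  push_neg at hcard
  obtain ⟨i, j, hi, hj, hij⟩ := (Set.one_lt_ncard_iff (Set.toFinite _)).mp hcard
  obtain ⟨hi0, hip⟩ := hi
  obtain ⟨hj0, hjp⟩ := hj
  have hαi1 : α i ≤ 1 := (hαD.1 i).2
  have hαj1 : α j ≤ 1 := (hαD.1 j).2
  have hpi1 : p i ≤ 1 := (hp i).2
  have hpj1 : p j ≤ 1 := (hp j).2
  set t₁ := min (α i) (p j - α j) with ht₁
  set t₂ := min (p i - α i) (α j) with ht₂
  have ht₁pos : 0 < t₁ := lt_min hi0 (by linarith)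
  have ht₂pos : 0 < t₂ := lt_min (by linarith) hj0
  have ht₁a : t₁ ≤ α i := min_le_left _ _
  have ht₁b : t₁ ≤ p j - α j := min_le_right _ _
  have ht₂a : t₂ ≤ p i - α i := min_le_left _ _
  have ht₂b : t₂ ≤ α j := min_le_right _ _
  set β : Fin n → ℝ := fun k => if k = i then α i - t₁ else if k = j then α j + t₁ else α k
    with hβdef
  set γ : Fin n → ℝ := fun k => if k = i then α i + t₂ else if k = j then α j - t₂ else α k
    with hγdef
  have hβi : β i = α i - t₁ := by simp [hβdef]
  have hβj : β j = α j + t₁ := by simp [hβdef, hij.symm]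
  have hγi : γ i = α i + t₂ := by simp [hγdef]
  have hγj : γ j = α j - t₂ := by simp [hγdef, hij.symm]
  have hβo : ∀ k, k ≠ i → k ≠ j → β k = α k := by
    intro k h1 h2; simp [hβdef, h1, h2]
  have hγo : ∀ k, k ≠ i → k ≠ j → γ k = α k := by
    intro k h1 h2; simp [hγdef, h1, h2]
  -- feasibility of β and γ
  have hsumβ : ∑ k, β k = ∑ k, α k := by
    rw [sum_split_two i j hij β, sum_split_two i j hij α, hβi, hβj,
      Finset.sum_congr rfl (fun k hk => by
        simp only [Finset.mem_erase] at hk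
        exact hβo k hk.2.1 hk.1)]
    ring
  have hsumγ : ∑ k, γ k = ∑ k, α k := by
    rw [sum_split_two i j hij γ, sum_split_two i j hij α, hγi, hγj,
      Finset.sum_congr rfl (fun k hk => by
        simp only [Finset.mem_erase] at hk
        exact hγo k hk.2.1 hk.1)]
    ring
  have hβD : β ∈ D := by
    refine ⟨fun k => ?_, by rw [hsumβ]; exact hαD.2⟩
    by_cases h1 : k = i
    · subst h1; rw [hβi]; constructor <;> linarith
    by_cases h2 : k = j
    · subst h2; rw [hβj]; constructor <;> linarith
    · rw [hβo k h1 h2]; exact hαD.1 k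
  have hγD : γ ∈ D := by
    refine ⟨fun k => ?_, by rw [hsumγ]; exact hαD.2⟩
    by_cases h1 : k = i
    · subst h1; rw [hγi]; constructor <;> linarith
    by_cases h2 : k = j
    · subst h2; rw [hγj]; constructor <;> linarith
    · rw [hγo k h1 h2]; exact hαD.1 k
  -- values of F
  set R := ∑ k ∈ (Finset.univ.erase i).erase j, V k (max (p k - α k) 0) with hR
  set a := p i - α i with ha
  set b := p j - α j with hb
  have hFα : F α = V i a + V j b + R := by
    rw [hFdef]
    simp only
    rw [sum_split_two i j hij, max_eq_left (by linarith : (0:ℝ) ≤ p i - α i),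
      max_eq_left (by linarith : (0:ℝ) ≤ p j - α j)]
  have hFβ : F β = V i (a + t₁) + V j (b - t₁) + R := by
    rw [hFdef]
    simp only
    rw [sum_split_two i j hij, hβi, hβj,
      max_eq_left (by linarith : (0:ℝ) ≤ p i - (α i - t₁)),
      max_eq_left (by linarith : (0:ℝ) ≤ p j - (α j + t₁)),
      Finset.sum_congr rfl (fun k hk => by
        simp only [Finset.mem_erase] at hk
        rw [hβo k hk.2.1 hk.1])]
    rw [ha, hb, hR]; ring_nf
  have hFγ : F γ = V i (a - t₂) + V j (b + t₂) + R := by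
    rw [hFdef]
    simp only
    rw [sum_split_two i j hij, hγi, hγj,
      max_eq_left (by linarith : (0:ℝ) ≤ p i - (α i + t₂)),
      max_eq_left (by linarith : (0:ℝ) ≤ p j - (α j - t₂)),
      Finset.sum_congr rfl (fun k hk => by
        simp only [Finset.mem_erase] at hk
        rw [hγo k hk.2.1 hk.1])]
    rw [ha, hb, hR]; ring_nf
  -- concavity
  set lam := t₂ / (t₁ + t₂) with hlam
  set mu := t₁ / (t₁ + t₂) with hmu
  have hsumt : 0 < t₁ + t₂ := by linarith
  have hlam0 : 0 < lam := div_pos ht₂pos hsumt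
  have hmu0 : 0 < mu := div_pos ht₁pos hsumt
  have hlm : lam + mu = 1 := by
    rw [hlam, hmu, ← add_div, div_eq_one_iff_eq hsumt.ne']; ring
  have hkeymul : lam * t₁ = mu * t₂ := by rw [hlam, hmu]; ring
  have hconc_i : lam * V i (a + t₁) + mu * V i (a - t₂) ≤ V i a := by
    have hmem1 : a + t₁ ∈ Set.Icc (0:ℝ) 1 := ⟨by linarith, by linarith⟩
    have hmem2 : a - t₂ ∈ Set.Icc (0:ℝ) 1 := ⟨by linarith, by linarith⟩
    have := (hVconc i).2 hmem1 hmem2 hlam0.le hmu0.le hlm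
    simp only [smul_eq_mul] at this
    have he : lam * (a + t₁) + mu * (a - t₂) = a := by
      linear_combination a * hlm + hkeymul
    rwa [he] at this
  have hconc_j : lam * V j (b - t₁) + mu * V j (b + t₂) ≤ V j b := by
    have hmem1 : b - t₁ ∈ Set.Icc (0:ℝ) 1 := ⟨by linarith, by linarith⟩
    have hmem2 : b + t₂ ∈ Set.Icc (0:ℝ) 1 := ⟨by linarith, by linarith⟩
    have := (hVconc j).2 hmem1 hmem2 hlam0.le hmu0.le hlm
    simp only [smul_eq_mul] at this
    have he : lam * (b - t₁) + mu * (b + t₂) = b := by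
      linear_combination b * hlm - hkeymul
    rwa [he] at this
  have hkey : lam * F β + mu * F γ ≤ F α := by
    rw [hFα, hFβ, hFγ]
    have hRR : lam * R + mu * R = R := by linear_combination R * hlm
    linarith only [hconc_i, hconc_j, hRR]
  have hle1 : F α ≤ F β := isMinOn_iff.mp hαmin β hβD
  have hle2 : F α ≤ F γ := isMinOn_iff.mp hαmin γ hγD
  have hcase : F β = F α ∨ F γ = F α := by
    by_contra h
    push_neg at h
    have hb1 : F α < F β := lt_of_le_of_ne hle1 (fun e => h.1 e.symm)
    have hb2 : F α < F γ := lt_of_le_of_ne hle2 (fun e => h.2 e.symm)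
    have e1 : lam * F α < lam * F β := by exact mul_lt_mul_of_pos_left hb1 hlam0
    have e2 : mu * F α < mu * F γ := by exact mul_lt_mul_of_pos_left hb2 hmu0
    have e3 : lam * F α + mu * F α = F α := by linear_combination (F α) * hlm
    linarith only [hkey, e1, e2, e3]
  -- in either case we get a minimizer with strictly fewer fractional coordinates
  have contr : ∀ δ : Fin n → ℝ, δ ∈ D → F δ = F α →
      {k : Fin n | 0 < δ k ∧ δ k < p k} ⊂ {k : Fin n | 0 < α k ∧ α k < p k} → False := by
    intro δ hδD hδF hss
    have hδmin : IsMinOn F D δ := by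
      rw [isMinOn_iff]
      intro x hx
      rw [hδF]
      exact isMinOn_iff.mp hαmin x hx
    have hlt : {k : Fin n | 0 < δ k ∧ δ k < p k}.ncard < Nat.find hP := by
      rw [← hαcard]
      exact Set.ncard_lt_ncard hss (Set.toFinite _)
    exact Nat.find_min hP hlt ⟨δ, hδD, hδmin, rfl⟩
  have hsubβ : {k : Fin n | 0 < β k ∧ β k < p k} ⊆ {k : Fin n | 0 < α k ∧ α k < p k} := by
    intro k hk
    by_cases h1 : k = i
    · subst h1; exact ⟨hi0, hip⟩
    by_cases h2 : k = j
    · subst h2; exact ⟨hj0, hjp⟩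
    · rwa [Set.mem_setOf_eq, hβo k h1 h2] at hk
  have hsubγ : {k : Fin n | 0 < γ k ∧ γ k < p k} ⊆ {k : Fin n | 0 < α k ∧ α k < p k} := by
    intro k hk
    by_cases h1 : k = i
    · subst h1; exact ⟨hi0, hip⟩
    by_cases h2 : k = j
    · subst h2; exact ⟨hj0, hjp⟩
    · rwa [Set.mem_setOf_eq, hγo k h1 h2] at hk
  rcases hcase with hEq | hEq
  · refine contr β hβD hEq ((Set.ssubset_iff_of_subset hsubβ).mpr ?_)
    rcases le_total (α i) (p j - α j) with h | h
    · refine ⟨i, ⟨hi0, hip⟩, ?_⟩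
      intro hmem
      have : β i = 0 := by rw [hβi, ht₁, min_eq_left h]; ring
      rw [Set.mem_setOf_eq, this] at hmem
      exact lt_irrefl 0 hmem.1
    · refine ⟨j, ⟨hj0, hjp⟩, ?_⟩
      intro hmem
      have : β j = p j := by rw [hβj, ht₁, min_eq_right h]; ring
      rw [Set.mem_setOf_eq, this] at hmem
      exact lt_irrefl (p j) hmem.2
  · refine contr γ hγD hEq ((Set.ssubset_iff_of_subset hsubγ).mpr ?_)
    rcases le_total (p i - α i) (α j) with h | h
    · refine ⟨i, ⟨hi0, hip⟩, ?_⟩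
      intro hmem
      have : γ i = p i := by rw [hγi, ht₂, min_eq_left h]; ring
      rw [Set.mem_setOf_eq, this] at hmem
      exact lt_irrefl (p i) hmem.2
    · refine ⟨j, ⟨hj0, hjp⟩, ?_⟩
      intro hmem
      have : γ j = 0 := by rw [hγj, ht₂, min_eq_right h]; ring
      rw [Set.mem_setOf_eq, this] at hmem
      exact lt_irrefl 0 hmem.1
end

section
/- Let n ≥ 2, fix k ∈ {1,...,n}, let p_1, ..., p_n be reals with 0 < p_i ≤ 1, let V > 0 and c > 0 with Σ_i p_i > c, and let V_k : ℝ → ℝ be concave on [0, p_k]. For a subset S ⊆ {1,...,n} \ {k}, call S feasible if c − p_k ≤ Σ_{i∈S} p_i ≤ c, and define its cost J(S) = V · (Σ_{i∉S, i≠k} p_i) + V_k(p_k + Σ_{i∈S} p_i − c). If the family of feasible subsets is nonempty, then there is a feasible subset S* minimizing J over all feasible subsets such that S* either maximizes Σ_{i∈S} p_i among feasible subsets or minimizes Σ_{i∈S} p_i among feasible subsets. -/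
/-- Lemma 3 (combinatorial content): among feasible subsets `S ⊆ [n] \ {k}`
(those with `c − p_k ≤ Σ_{i∈S} p_i ≤ c`), the cost
`J(S) = V·Σ_{i∉S, i≠k} p_i + V_k(p_k + Σ_{i∈S} p_i − c)` is minimized by a subset
whose subset-sum `Σ_{i∈S} p_i` is extremal (maximal or minimal) among feasible subsets. -/
theorem stmt_2 (n : ℕ) (hn : 2 ≤ n) (k : Fin n) (p : Fin n → ℝ)
    (hp : ∀ i, 0 < p i ∧ p i ≤ 1) (V c : ℝ) (hV : 0 < V) (hc : 0 < c)
    (hover : c < ∑ i, p i) (Vk : ℝ → ℝ)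
    (hVk : ConcaveOn ℝ (Set.Icc 0 (p k)) Vk)
    (feasible : Finset (Fin n) → Prop)
    (hfeasible : ∀ S, feasible S ↔
      k ∉ S ∧ c - p k ≤ ∑ i ∈ S, p i ∧ ∑ i ∈ S, p i ≤ c)
    (J : Finset (Fin n) → ℝ)
    (hJ : ∀ S, J S =
      V * ∑ i ∈ Finset.univ \ (S ∪ {k}), p i + Vk (p k + ∑ i ∈ S, p i - c))
    (hne : ∃ S, feasible S) :
    ∃ Sstar, feasible Sstar ∧ (∀ S, feasible S → J Sstar ≤ J S) ∧
      ((∀ S, feasible S → ∑ i ∈ S, p i ≤ ∑ i ∈ Sstar, p i) ∨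
       (∀ S, feasible S → ∑ i ∈ Sstar, p i ≤ ∑ i ∈ S, p i)) := by
  classical
  set T : ℝ := ∑ i, p i with hT
  set σ : Finset (Fin n) → ℝ := fun S => ∑ i ∈ S, p i with hσ
  -- J S is a function of σ S on feasible sets
  set g : ℝ → ℝ := fun x => V * (T - p k - x) + Vk (p k + x - c) with hg
  have hJg : ∀ S, feasible S → J S = g (σ S) := by
    intro S hS
    obtain ⟨hkS, -, -⟩ := (hfeasible S).1 hS
    have hsub : S ∪ {k} ⊆ Finset.univ := Finset.subset_univ _
    have hsum : ∑ i ∈ Finset.univ \ (S ∪ {k}), p i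
        = T - (σ S + p k) := by
      have h1 := Finset.sum_sdiff (f := p) hsub
      have h2 : ∑ i ∈ S ∪ {k}, p i = σ S + p k := by
        rw [Finset.sum_union (by simpa using hkS)]
        simp [hσ]
      linarith [h1, h2.symm]
    rw [hJ S, hsum, hg]
    ring_nf
    simp only [hσ]
    ring_nf
  -- feasible sets as a Finset
  set F : Finset (Finset (Fin n)) := Finset.univ.filter feasible with hF
  have hmemF : ∀ S, S ∈ F ↔ feasible S := by intro S; simp [hF]
  have hFne : F.Nonempty := by
    obtain ⟨S, hS⟩ := hne; exact ⟨S, (hmemF S).2 hS⟩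
  obtain ⟨Smax, hSmaxF, hmax⟩ := F.exists_max_image σ hFne
  obtain ⟨Smin, hSminF, hmin⟩ := F.exists_min_image σ hFne
  have hSmax : feasible Smax := (hmemF _).1 hSmaxF
  have hSmin : feasible Smin := (hmemF _).1 hSminF
  -- key: min (J Smin) (J Smax) ≤ J S for feasible S
  have key : ∀ S, feasible S → min (J Smin) (J Smax) ≤ J S := by
    intro S hS
    have has : σ Smin ≤ σ S := hmin S ((hmemF S).2 hS)
    have hsb : σ S ≤ σ Smax := hmax S ((hmemF S).2 hS)
    set a := σ Smin with ha
    set b := σ Smax with hb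
    set s := σ S with hs
    have haeq : a = ∑ i ∈ Smin, p i := rfl
    have hbeq : b = ∑ i ∈ Smax, p i := rfl
    have hseq : s = ∑ i ∈ S, p i := rfl
    rw [hJg S hS, hJg Smin hSmin, hJg Smax hSmax]
    show min (g a) (g b) ≤ g s
    obtain ⟨-, hamem1, hamem2⟩ := (hfeasible Smin).1 hSmin
    obtain ⟨-, hbmem1, hbmem2⟩ := (hfeasible Smax).1 hSmax
    rcases eq_or_lt_of_le (le_trans has hsb) with heq | hab
    · have h1 : s = a := le_antisymm (heq ▸ hsb) has
      exact le_of_le_of_eq (min_le_left _ _) (by rw [h1])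
    · set t : ℝ := (b - s) / (b - a) with ht
      set t' : ℝ := (s - a) / (b - a) with ht'
      have hba : (0:ℝ) < b - a := by linarith
      have ht0 : 0 ≤ t := div_nonneg (by linarith) hba.le
      have ht'0 : 0 ≤ t' := div_nonneg (by linarith) hba.le
      have htt : t + t' = 1 := by rw [ht, ht']; field_simp; ring
      have hxmem : p k + a - c ∈ Set.Icc 0 (p k) := by
        constructor
        · rw [haeq]; linarith
        · rw [haeq]; linarith
      have hymem : p k + b - c ∈ Set.Icc 0 (p k) := by
        constructor
        · rw [hbeq]; linarith
        · rw [hbeq]; linarith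
      have hconc := hVk.2 hxmem hymem ht0 ht'0 htt
      simp only [smul_eq_mul] at hconc
      have hcomb : t * (p k + a - c) + t' * (p k + b - c) = p k + s - c := by
        rw [ht, ht']; field_simp; ring
      rw [hcomb] at hconc
      have hmina : min (g a) (g b) ≤ g a := min_le_left _ _
      have hminb : min (g a) (g b) ≤ g b := min_le_right _ _
      have hstep : t * g a + t' * g b ≤ g s := by
        have hlin : V * (T - p k - s) = t * (V * (T - p k - a)) + t' * (V * (T - p k - b)) := by
          rw [ht, ht']; field_simp; ring
        simp only [hg]
        nlinarith [hconc]
      calc min (g a) (g b) = t * min (g a) (g b) + t' * min (g a) (g b) := by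
            rw [← add_mul, htt, one_mul]
        _ ≤ t * g a + t' * g b := by
            have h1 := mul_le_mul_of_nonneg_left hmina ht0
            have h2 := mul_le_mul_of_nonneg_left hminb ht'0
            linarith
        _ ≤ g s := hstep
  rcases le_total (J Smax) (J Smin) with h | h
  · exact ⟨Smax, hSmax, fun S hS => (min_eq_right h) ▸ key S hS,
      Or.inl fun S hS => hmax S ((hmemF S).2 hS)⟩
  · exact ⟨Smin, hSmin, fun S hS => (min_eq_left h) ▸ key S hS,
      Or.inr fun S hS => hmin S ((hmemF S).2 hS)⟩
end

section
/- Let n be a positive integer, let p_1, ..., p_n be reals with 0 < p_i ≤ 1 for each i, let c > 0 with Σ_i p_i > c, and for each i let V_i : ℝ → ℝ be continuous, nondecreasing and concave on [0,1] with V_i(0) = 0. Consider the feasible set D = {α ∈ ℝ^n : 0 ≤ α_i ≤ 1 for all i, and Σ_i α_i ≤ c} and the objective F(α) = Σ_i V_i(max(p_i − α_i, 0)). Let E be the (finite, nonempty) set of α ∈ D such that Σ_i α_i = c, 0 ≤ α_i ≤ p_i for all i, and there exists k with α_i ∈ {0, p_i} for every i ≠ k. Then the infimum of F over D equals the minimum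 of F over E. -/
open Finset

noncomputable def fracS {n : ℕ} (p α : Fin n → ℝ) : Finset (Fin n) := by
  classical exact univ.filter (fun i => α i ≠ 0 ∧ α i ≠ p i)

lemma mem_fracS {n : ℕ} {p α : Fin n → ℝ} {i : Fin n} :
    i ∈ fracS p α ↔ α i ≠ 0 ∧ α i ≠ p i := by
  classical simp [fracS]

lemma sum_split {n : ℕ} (f : Fin n → ℝ) {i j : Fin n} (hij : i ≠ j) :
    ∑ m, f m = ∑ m ∈ (univ.erase i).erase j, f m + f j + f i := by
  have h2 : ∑ m ∈ (univ.erase i).erase j, f m + f j = ∑ m ∈ univ.erase i, f m :=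
    Finset.sum_erase_add _ _ (by simp [hij.symm])
  have h1 : ∑ m ∈ univ.erase i, f m + f i = ∑ m, f m :=
    Finset.sum_erase_add _ _ (mem_univ i)
  linarith

lemma combo_le {wA wB FA FB Fc : ℝ} (h0A : 0 ≤ wA) (h0B : 0 ≤ wB)
    (hsum : wA + wB = 1) (hkey : wA * FA + wB * FB ≤ Fc) (hAB : FA ≤ FB) : FA ≤ Fc := by
  have h1 : wA * FA + wB * FA = FA := by rw [← add_mul, hsum, one_mul]
  nlinarith [mul_nonneg h0B (sub_nonneg.2 hAB), h1]

lemma exchange {n : ℕ} (p : Fin n → ℝ) (hp : ∀ i, 0 < p i ∧ p i ≤ 1)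
    (V : Fin n → ℝ → ℝ) (hVconc : ∀ i, ConcaveOn ℝ (Set.Icc 0 1) (V i))
    (α : Fin n → ℝ) (hα : ∀ i, 0 ≤ α i ∧ α i ≤ p i)
    {i j : Fin n} (hij : i ≠ j) (hi : i ∈ fracS p α) (hj : j ∈ fracS p α) :
    ∃ α' : Fin n → ℝ, (∀ m, 0 ≤ α' m ∧ α' m ≤ p m) ∧ (∑ m, α' m = ∑ m, α m) ∧
      (∑ m, V m (p m - α' m)) ≤ (∑ m, V m (p m - α m)) ∧
      fracS p α' ⊂ fracS p α := by
  obtain ⟨hi0, hip⟩ := mem_fracS.1 hi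
  obtain ⟨hj0, hjp⟩ := mem_fracS.1 hj
  have hi0' : 0 < α i := lt_of_le_of_ne (hα i).1 (Ne.symm hi0)
  have hip' : α i < p i := lt_of_le_of_ne (hα i).2 hip
  have hj0' : 0 < α j := lt_of_le_of_ne (hα j).1 (Ne.symm hj0)
  have hjp' : α j < p j := lt_of_le_of_ne (hα j).2 hjp
  set e := min (p i - α i) (α j) with hedef
  set d := min (α i) (p j - α j) with hddef
  have he : 0 < e := lt_min (by linarith) hj0'
  have hd : 0 < d := lt_min hi0' (by linarith)
  have hei : e ≤ p i - α i := min_le_left _ _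
  have hej : e ≤ α j := min_le_right _ _
  have hdi : d ≤ α i := min_le_left _ _
  have hdj : d ≤ p j - α j := min_le_right _ _
  set αA := Function.update (Function.update α i (α i + e)) j (α j - e) with hαAdef
  set αB := Function.update (Function.update α i (α i - d)) j (α j + d) with hαBdef
  have hAi : αA i = α i + e := by simp [hαAdef, Function.update_apply, hij]
  have hAj : αA j = α j - e := by simp [hαAdef, Function.update_apply]
  have hBi : αB i = α i - d := by simp [hαBdef, Function.update_apply, hij]
  have hBj : αB j = α j + d := by simp [hαBdef, Function.update_apply]
  have hAo : ∀ m, m ≠ i → m ≠ j → αA m = α m := by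
    intro m hmi hmj; simp [hαAdef, Function.update_apply, hmi, hmj]
  have hBo : ∀ m, m ≠ i → m ≠ j → αB m = α m := by
    intro m hmi hmj; simp [hαBdef, Function.update_apply, hmi, hmj]
  have hboundsA : ∀ m, 0 ≤ αA m ∧ αA m ≤ p m := by
    intro m
    rcases eq_or_ne m i with rfl | hmi
    · rw [hAi]; constructor <;> linarith
    rcases eq_or_ne m j with rfl | hmj
    · rw [hAj]; constructor <;> linarith
    · rw [hAo m hmi hmj]; exact hα m
  have hboundsB : ∀ m, 0 ≤ αB m ∧ αB m ≤ p m := by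
    intro m
    rcases eq_or_ne m i with rfl | hmi
    · rw [hBi]; constructor <;> linarith
    rcases eq_or_ne m j with rfl | hmj
    · rw [hBj]; constructor <;> linarith
    · rw [hBo m hmi hmj]; exact hα m
  -- sums of coordinates
  have congrA : ∀ (g : Fin n → ℝ → ℝ), ∑ m ∈ (univ.erase i).erase j, g m (αA m)
      = ∑ m ∈ (univ.erase i).erase j, g m (α m) := by
    intro g
    refine Finset.sum_congr rfl ?_
    intro m hm
    rw [Finset.mem_erase] at hm
    obtain ⟨hmj, hm'⟩ := hm
    rw [Finset.mem_erase] at hm'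
    rw [hAo m hm'.1 hmj]
  have congrB : ∀ (g : Fin n → ℝ → ℝ), ∑ m ∈ (univ.erase i).erase j, g m (αB m)
      = ∑ m ∈ (univ.erase i).erase j, g m (α m) := by
    intro g
    refine Finset.sum_congr rfl ?_
    intro m hm
    rw [Finset.mem_erase] at hm
    obtain ⟨hmj, hm'⟩ := hm
    rw [Finset.mem_erase] at hm'
    rw [hBo m hm'.1 hmj]
  have hsumA : ∑ m, αA m = ∑ m, α m := by
    rw [sum_split αA hij, sum_split α hij, congrA (fun _ x => x), hAi, hAj]; ring
  have hsumB : ∑ m, αB m = ∑ m, α m := by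
    rw [sum_split αB hij, sum_split α hij, congrB (fun _ x => x), hBi, hBj]; ring
  -- objective values
  set S₂ := ∑ m ∈ (univ.erase i).erase j, V m (p m - α m) with hS₂
  set u := p i - α i with hu
  set v := p j - α j with hv
  set FA := ∑ m, V m (p m - αA m) with hFAdef
  set FB := ∑ m, V m (p m - αB m) with hFBdef
  set Fα := ∑ m, V m (p m - α m) with hFαdef
  have hFα : Fα = S₂ + V j v + V i u := sum_split _ hij
  have hFA : FA = S₂ + V j (v + e) + V i (u - e) := by
    rw [hFAdef, sum_split _ hij, congrA (fun m x => V m (p m - x)), hAi, hAj]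
    have e1 : p j - (α j - e) = v + e := by rw [hv]; ring
    have e2 : p i - (α i + e) = u - e := by rw [hu]; ring
    rw [e1, e2]
  have hFB : FB = S₂ + V j (v - d) + V i (u + d) := by
    rw [hFBdef, sum_split _ hij, congrB (fun m x => V m (p m - x)), hBi, hBj]
    have e1 : p j - (α j + d) = v - d := by rw [hv]; ring
    have e2 : p i - (α i - d) = u + d := by rw [hu]; ring
    rw [e1, e2]
  -- concavity
  have hed : 0 < e + d := by linarith
  set wA := d / (e + d) with hwA
  set wB := e / (e + d) with hwB
  have hwA0 : 0 ≤ wA := by positivity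
  have hwB0 : 0 ≤ wB := by positivity
  have hwsum : wA + wB = 1 := by rw [hwA, hwB, ← add_div, add_comm d e]; exact div_self hed.ne'
  have memi1 : u - e ∈ Set.Icc (0:ℝ) 1 := ⟨by simp [hu]; linarith, by simp [hu]; linarith [(hp i).2]⟩
  have memi2 : u + d ∈ Set.Icc (0:ℝ) 1 := ⟨by simp [hu]; linarith, by simp [hu]; linarith [(hp i).2]⟩
  have memj1 : v + e ∈ Set.Icc (0:ℝ) 1 := ⟨by simp [hv]; linarith, by simp [hv]; linarith [(hp j).2]⟩
  have memj2 : v - d ∈ Set.Icc (0:ℝ) 1 := ⟨by simp [hv]; linarith, by simp [hv]; linarith [(hp j).2]⟩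
  have c1 : wA * V i (u - e) + wB * V i (u + d) ≤ V i u := by
    have h := (hVconc i).2 memi1 memi2 hwA0 hwB0 hwsum
    rw [smul_eq_mul, smul_eq_mul, smul_eq_mul, smul_eq_mul] at h
    have harg : wA * (u - e) + wB * (u + d) = u := by
      rw [hwA, hwB]; field_simp; ring
    rwa [harg] at h
  have c2 : wA * V j (v + e) + wB * V j (v - d) ≤ V j v := by
    have h := (hVconc j).2 memj1 memj2 hwA0 hwB0 hwsum
    rw [smul_eq_mul, smul_eq_mul, smul_eq_mul, smul_eq_mul] at h
    have harg : wA * (v + e) + wB * (v - d) = v := by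
      rw [hwA, hwB]; field_simp; ring
    rwa [harg] at h
  clear_value u v wA wB S₂ FA FB Fα
  have hS2eq : wA * S₂ + wB * S₂ = S₂ := by rw [← add_mul, hwsum, one_mul]
  have key : wA * FA + wB * FB ≤ Fα := by
    rw [hFA, hFB, hFα]; linarith [c1, c2, hS2eq]
  -- strict subset facts
  have hsubA : fracS p αA ⊆ fracS p α := by
    intro m hm
    rcases eq_or_ne m i with rfl | hmi
    · exact hi
    rcases eq_or_ne m j with rfl | hmj
    · exact hj
    · rw [mem_fracS] at hm ⊢; rwa [hAo m hmi hmj] at hm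
  have hsubB : fracS p αB ⊆ fracS p α := by
    intro m hm
    rcases eq_or_ne m i with rfl | hmi
    · exact hi
    rcases eq_or_ne m j with rfl | hmj
    · exact hj
    · rw [mem_fracS] at hm ⊢; rwa [hBo m hmi hmj] at hm
  have hstrictA : fracS p αA ⊂ fracS p α := by
    rw [Finset.ssubset_iff_of_subset hsubA]
    rcases le_total (p i - α i) (α j) with h | h
    · refine ⟨i, hi, ?_⟩
      rw [mem_fracS]
      have he' : e = p i - α i := by rw [hedef, hu]; exact min_eq_left h
      exact fun hcon => hcon.2 (by rw [hAi, he']; ring)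
    · refine ⟨j, hj, ?_⟩
      rw [mem_fracS]
      have he' : e = α j := by rw [hedef, hu]; exact min_eq_right h
      exact fun hcon => hcon.1 (by rw [hAj, he']; ring)
  have hstrictB : fracS p αB ⊂ fracS p α := by
    rw [Finset.ssubset_iff_of_subset hsubB]
    rcases le_total (α i) (p j - α j) with h | h
    · refine ⟨i, hi, ?_⟩
      rw [mem_fracS]
      have hd' : d = α i := by rw [hddef, hv]; exact min_eq_left h
      exact fun hcon => hcon.1 (by rw [hBi, hd']; ring)
    · refine ⟨j, hj, ?_⟩
      rw [mem_fracS]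
      have hd' : d = p j - α j := by rw [hddef, hv]; exact min_eq_right h
      exact fun hcon => hcon.2 (by rw [hBj, hd']; ring)
  rcases le_total FA FB with hAB | hAB
  · refine ⟨αA, hboundsA, hsumA, ?_, hstrictA⟩
    have hgoal : FA ≤ Fα := combo_le hwA0 hwB0 hwsum key hAB
    first
    | exact hgoal
    | (rw [hFAdef] at hgoal; exact hgoal)
    | (rw [hFAdef, hFαdef] at hgoal; exact hgoal)
  · refine ⟨αB, hboundsB, hsumB, ?_, hstrictB⟩
    have hgoal : FB ≤ Fα := combo_le hwB0 hwA0 (by linarith) (by linarith) hAB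
    first
    | exact hgoal
    | (rw [hFBdef] at hgoal; exact hgoal)
    | (rw [hFBdef, hFαdef] at hgoal; exact hgoal)

lemma reduce {n : ℕ} (p : Fin n → ℝ) (hp : ∀ i, 0 < p i ∧ p i ≤ 1)
    (V : Fin n → ℝ → ℝ) (hVconc : ∀ i, ConcaveOn ℝ (Set.Icc 0 1) (V i)) :
    ∀ N (α : Fin n → ℝ), (∀ i, 0 ≤ α i ∧ α i ≤ p i) → (fracS p α).card ≤ N →
    ∃ α', (∀ m, 0 ≤ α' m ∧ α' m ≤ p m) ∧ (∑ m, α' m = ∑ m, α m) ∧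
      (∑ m, V m (p m - α' m)) ≤ (∑ m, V m (p m - α m)) ∧ (fracS p α').card ≤ 1 := by
  intro N
  induction N with
  | zero => intro α hα hcard; exact ⟨α, hα, rfl, le_refl _, by omega⟩
  | succ N ih =>
    intro α hα hcard
    by_cases h1 : (fracS p α).card ≤ 1
    · exact ⟨α, hα, rfl, le_refl _, h1⟩
    · have h2 : 1 < (fracS p α).card := by omega
      obtain ⟨i, hi, j, hj, hij⟩ := Finset.one_lt_card.1 h2
      obtain ⟨α', hb, hs, hF, hss⟩ := exchange p hp V hVconc α hα hij hi hj
      have hcard' : (fracS p α').card ≤ N := by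
        have := Finset.card_lt_card hss; omega
      obtain ⟨α'', hb2, hs2, hF2, h12⟩ := ih α' hb hcard'
      exact ⟨α'', hb2, by rw [hs2, hs], le_trans hF2 hF, h12⟩



/-- Theorem 2 (mathematical core, overloaded case `Σᵢ pᵢ > c`): the infimum of the
continuous non-convex problem over `D = {0 ≤ αᵢ ≤ 1, Σαᵢ ≤ c}` is attained at a point
of the finite set `E` of extreme allocations, where the resource constraint is tight
and at most one user receives a fractional rate. -/
theorem stmt_3 (n : ℕ) (hn : 0 < n) (p : Fin n → ℝ)
    (hp : ∀ i, 0 < p i ∧ p i ≤ 1) (c : ℝ) (hc : 0 < c)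
    (hover : c < ∑ i, p i)
    (V : Fin n → ℝ → ℝ)
    (hVcont : ∀ i, ContinuousOn (V i) (Set.Icc 0 1))
    (hVmono : ∀ i, MonotoneOn (V i) (Set.Icc 0 1))
    (hVconc : ∀ i, ConcaveOn ℝ (Set.Icc 0 1) (V i))
    (hV0 : ∀ i, V i 0 = 0) :
    ∃ α : Fin n → ℝ,
      (∑ i, α i = c ∧ (∀ i, 0 ≤ α i ∧ α i ≤ p i) ∧
        ∃ k : Fin n, ∀ i, i ≠ k → α i = 0 ∨ α i = p i) ∧
      (∀ β : Fin n → ℝ, (∀ i, 0 ≤ β i ∧ β i ≤ 1) → ∑ i, β i ≤ c →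
        ∑ i, V i (max (p i - α i) 0) ≤ ∑ i, V i (max (p i - β i) 0)) := by
  classical
  have hPpos : 0 < ∑ i, p i := hc.trans hover
  set S : Set (Fin n → ℝ) := {α | (∀ i, 0 ≤ α i ∧ α i ≤ p i) ∧ ∑ i, α i = c} with hSdef
  have hSne : S.Nonempty := by
    refine ⟨fun i => (c / ∑ k, p k) * p i, fun i => ⟨?_, ?_⟩, ?_⟩
    · exact mul_nonneg (div_nonneg hc.le hPpos.le) (hp i).1.le
    · have h1 : c / ∑ k, p k ≤ 1 := (div_le_one hPpos).2 hover.le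
      calc (c / ∑ k, p k) * p i ≤ 1 * p i :=
            mul_le_mul_of_nonneg_right h1 (hp i).1.le
        _ = p i := one_mul _
    · rw [← Finset.mul_sum]
      exact div_mul_cancel₀ c (ne_of_gt hPpos)
  have hScomp : IsCompact S := by
    have hSeq : S = (Set.pi Set.univ fun i => Set.Icc 0 (p i)) ∩
        {α : Fin n → ℝ | ∑ i, α i = c} := by
      ext α
      constructor
      · rintro ⟨h1, h2⟩; exact ⟨fun i _ => ⟨(h1 i).1, (h1 i).2⟩, h2⟩
      · rintro ⟨h1, h2⟩
        exact ⟨fun i => ⟨(h1 i (Set.mem_univ i)).1, (h1 i (Set.mem_univ i)).2⟩, h2⟩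
    rw [hSeq]
    exact (isCompact_univ_pi fun i => isCompact_Icc).inter_right
      (isClosed_eq (continuous_finset_sum _ fun i _ => continuous_apply i) continuous_const)
  have hFcont : ContinuousOn (fun α : Fin n → ℝ => ∑ i, V i (p i - α i)) S := by
    apply continuousOn_finset_sum
    intro i _
    apply ContinuousOn.comp (hVcont i)
      ((continuous_const.sub (continuous_apply i)).continuousOn)
    intro α hα
    obtain ⟨h1, _⟩ := hα
    have h2 : p i - α i ∈ Set.Icc (0:ℝ) 1 :=
      ⟨by linarith [(h1 i).2], by linarith [(h1 i).1, (hp i).2]⟩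
    exact h2
  obtain ⟨m, hmS, hmin⟩ := hScomp.exists_isMinOn hSne hFcont
  obtain ⟨hmb, hmsum⟩ : (∀ i, 0 ≤ m i ∧ m i ≤ p i) ∧ ∑ i, m i = c := hmS
  obtain ⟨α, hαb, hαsum, hαF, hαcard⟩ := reduce p hp V hVconc n m hmb
    (le_trans (Finset.card_le_univ _) (by simp))
  have hαS : α ∈ S := ⟨hαb, by rw [hαsum, hmsum]⟩
  have hk : ∃ k : Fin n, ∀ i, i ≠ k → α i = 0 ∨ α i = p i := by
    by_cases hne : (fracS p α).Nonempty
    · obtain ⟨k, hkmem⟩ := hne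
      refine ⟨k, fun i hik => ?_⟩
      by_contra hcon
      push_neg at hcon
      have hmem : i ∈ fracS p α := mem_fracS.2 ⟨hcon.1, hcon.2⟩
      exact hik (Finset.card_le_one.1 hαcard i hmem k hkmem)
    · refine ⟨⟨0, hn⟩, fun i _ => ?_⟩
      by_contra hcon
      push_neg at hcon
      exact hne ⟨i, mem_fracS.2 ⟨hcon.1, hcon.2⟩⟩
  refine ⟨α, ⟨by rw [hαsum, hmsum], hαb, hk⟩, ?_⟩
  intro β hβ hβsum
  have hL : ∑ i, V i (max (p i - α i) 0) = ∑ i, V i (p i - α i) := by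
    refine Finset.sum_congr rfl fun i _ => ?_
    rw [max_eq_left (by linarith [(hαb i).2])]
  rw [hL]
  set γ : Fin n → ℝ := fun i => min (β i) (p i) with hγ
  have hγb : ∀ i, 0 ≤ γ i ∧ γ i ≤ p i :=
    fun i => ⟨le_min (hβ i).1 (hp i).1.le, min_le_right _ _⟩
  have hγsum : ∑ i, γ i ≤ c :=
    le_trans (Finset.sum_le_sum fun i _ => min_le_left _ _) hβsum
  set s := ∑ i, γ i with hs
  have hsP : s < ∑ i, p i := lt_of_le_of_lt hγsum hover
  set t := (c - s) / (∑ i, p i - s) with ht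
  have ht0 : 0 ≤ t := div_nonneg (by linarith) (by linarith)
  have ht1 : t ≤ 1 := (div_le_one (by linarith)).2 (by linarith)
  set δ : Fin n → ℝ := fun i => γ i + t * (p i - γ i) with hδ
  have hδb : ∀ i, γ i ≤ δ i ∧ δ i ≤ p i := by
    intro i
    constructor
    · have h1 := mul_nonneg ht0 (by linarith [(hγb i).2] : (0:ℝ) ≤ p i - γ i)
      simp only [hδ]; linarith
    · have h1 : t * (p i - γ i) ≤ 1 * (p i - γ i) :=
        mul_le_mul_of_nonneg_right ht1 (by linarith [(hγb i).2])
      simp only [hδ]; linarith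
  have hδsum : ∑ i, δ i = c := by
    simp only [hδ]
    rw [Finset.sum_add_distrib, ← Finset.mul_sum]
    have hPs : (∑ i, (p i - γ i)) = (∑ i, p i) - s := by
      rw [Finset.sum_sub_distrib, hs]
    rw [hPs, ht, div_mul_cancel₀ _ (by linarith : (∑ i, p i) - s ≠ 0)]
    ring
  have hδS : δ ∈ S := ⟨fun i => ⟨le_trans (hγb i).1 (hδb i).1, (hδb i).2⟩, hδsum⟩
  have h1 : ∑ i, V i (p i - m i) ≤ ∑ i, V i (p i - δ i) := hmin hδS
  have h2 : ∑ i, V i (p i - δ i) ≤ ∑ i, V i (p i - γ i) := by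
    refine Finset.sum_le_sum fun i _ => ?_
    refine hVmono i ⟨?_, ?_⟩ ⟨?_, ?_⟩ (by linarith [(hδb i).1])
    · linarith [(hδb i).2]
    · linarith [(hγb i).1, (hδb i).1, (hp i).2]
    · linarith [(hγb i).2]
    · linarith [(hγb i).1, (hp i).2]
  have h3 : ∑ i, V i (p i - γ i) = ∑ i, V i (max (p i - β i) 0) := by
    refine Finset.sum_congr rfl fun i _ => ?_
    congr 1
    rcases le_total (β i) (p i) with h | h
    · rw [hγ]
      simp only []
      rw [min_eq_left h, max_eq_left (by linarith)]
    · rw [hγ]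
      simp only []
      rw [min_eq_right h, max_eq_right (by linarith), sub_self]
  linarith [hαF, h1, h2, h3.le, h3.ge]
end

section
/- Let h̄ ∈ (0,1], set δ = √(1 − h̄) and θ = 2/(1 + δ), so θ > 1. Then there exists M (depending only on h̄) such that for every m ≥ M the following holds. Let n be any positive integer, let (X_{u,c})_{u ∈ {1,...,n}, c ∈ {1,...,m}} be a family of mutually independent {0,1}-valued random variables with P(X_{u,c} = 1) = h̄_{u,c} ≥ h̄ for all u, c, and let s : {1,...,m} → {1,...,n} be any map such that each user u has at most two preimages, i.e. |s^{-1}(u)| ≤ 2 for all u. Consider the bipartite graph G with left vertex set {1,...,m} (slots), right vertex set {1,...,m} (channels), and an edge between slot j and channel c if and only if X_{s(j),c} = 1. Then the probability that G has no perfect matching (i.e., that there is no bijection g : {1,...,m} → {1,...,m} with X_{s(j),g(j)} = 1 for all j) is at most θ^{−m}. -/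
open MeasureTheory ProbabilityTheory

/-- Lemma 6: with independent ON/OFF channel states, each ON with probability at least
`h̄`, and a list of `m` slots referring to users with no user repeated more than twice,
the bipartite slot–channel graph fails to have a perfect matching with probability at
most `θ^{-m}` where `θ = 2/(1+√(1−h̄)) > 1`, for all sufficiently large `m`. -/
theorem stmt_4 (hbar : ℝ) (hhbar : hbar ∈ Set.Ioc (0 : ℝ) 1) :
    1 < 2 / (1 + Real.sqrt (1 - hbar)) ∧
    ∃ M : ℕ, ∀ m : ℕ, M ≤ m → ∀ n : ℕ, 0 < n →
      ∀ (Ω : Type) (_ : MeasurableSpace Ω) (μ : Measure Ω), IsProbabilityMeasure μ →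
      ∀ X : Fin n × Fin m → Ω → ℝ,
        iIndepFun X μ →
        (∀ u c, Measurable (X (u, c))) →
        (∀ u c ω, X (u, c) ω = 0 ∨ X (u, c) ω = 1) →
        (∀ u c, ENNReal.ofReal hbar ≤ μ {ω | X (u, c) ω = 1}) →
      ∀ s : Fin m → Fin n,
        (∀ u : Fin n, {j : Fin m | s j = u}.ncard ≤ 2) →
        μ {ω | ¬ ∃ g : Fin m ≃ Fin m, ∀ j, X (s j, g j) ω = 1} ≤
          ENNReal.ofReal ((2 / (1 + Real.sqrt (1 - hbar)))⁻¹ ^ m) := by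
  classical
  obtain ⟨hb0, hb1⟩ := hhbar
  have h1h0 : (0:ℝ) ≤ 1 - hbar := by linarith
  set δ : ℝ := Real.sqrt (1 - hbar) with hδdef
  have hδ0 : 0 ≤ δ := Real.sqrt_nonneg _
  have hδsq : δ ^ 2 = 1 - hbar := Real.sq_sqrt h1h0
  have hδ1 : δ < 1 := by nlinarith
  set ρ : ℝ := Real.sqrt δ with hρdef
  have hρ0 : 0 ≤ ρ := Real.sqrt_nonneg _
  have hρsq : ρ ^ 2 = δ := Real.sq_sqrt hδ0
  have hρ1 : ρ < 1 := by nlinarith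
  set r : ℝ := (1 + δ) / 2 with hrdef
  have hr0 : 0 < r := by rw [hrdef]; linarith
  have hr1 : r < 1 := by rw [hrdef]; linarith
  have hρr : ρ < r := by nlinarith [pow_pos (show (0:ℝ) < 1 - ρ by linarith) 2]
  have hθ : 1 < 2 / (1 + δ) := by rw [lt_div_iff₀ (by linarith : (0:ℝ) < 1 + δ)]; linarith
  refine ⟨hθ, ?_⟩
  have hinv : (2 / (1 + δ))⁻¹ = r := by rw [inv_div]
  have htend : Filter.Tendsto (fun m : ℕ => (m:ℝ)^3 * (ρ/r)^m) Filter.atTop (nhds 0) :=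
    tendsto_pow_const_mul_const_pow_of_lt_one 3 (div_nonneg hρ0 hr0.le)
      ((div_lt_one hr0).mpr hρr)
  obtain ⟨M, hM⟩ := Filter.eventually_atTop.mp
    ((htend.eventually_le_const one_pos).and (Filter.eventually_ge_atTop 1))
  refine ⟨M, ?_⟩
  intro m hm n hn Ω mΩ μ hμ X hind hmeas hbin hlow s hs
  obtain ⟨hsmall, hm1⟩ := hM m hm
  have hm1R : (1:ℝ) ≤ (m:ℝ) := by exact_mod_cast hm1
  have hrm0 : (0:ℝ) < r ^ m := pow_pos hr0 m
  have h3le : (m:ℝ)^3 * ρ^m ≤ r^m := by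
    rw [div_pow, mul_div_assoc'] at hsmall
    exact (div_le_one hrm0).mp hsmall
  have h2le : (m:ℝ)^2 * ρ^m ≤ 1 := by
    have h23 : (m:ℝ)^2 * ρ^m ≤ (m:ℝ)^3 * ρ^m := by
      have := pow_le_pow_right₀ hm1R (by norm_num : 2 ≤ 3)
      exact mul_le_mul_of_nonneg_right this (pow_nonneg hρ0 m)
    exact h23.trans (h3le.trans (pow_le_one₀ hr0.le hr1.le))
  -- events
  set E : Finset (Fin m) × Finset (Fin m) → Set Ω :=
    fun p => ⋂ q ∈ (p.1.image s) ×ˢ p.2ᶜ, X q ⁻¹' ({0} : Set ℝ) with hEdef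
  set P : Finset (Finset (Fin m) × Finset (Fin m)) :=
    Finset.univ.filter (fun p => p.2.card + 1 = p.1.card) with hPdef
  -- Step 1: Hall
  have hsub : {ω | ¬ ∃ g : Fin m ≃ Fin m, ∀ j, X (s j, g j) ω = 1} ⊆ ⋃ p ∈ P, E p := by
    intro ω hω
    simp only [Set.mem_setOf_eq] at hω
    set t : Fin m → Finset (Fin m) :=
      fun j => Finset.univ.filter (fun c => X (s j, c) ω = 1) with htdef
    have hhall : ¬ ∀ S : Finset (Fin m), S.card ≤ (S.biUnion t).card := by
      intro hall
      obtain ⟨f, hfinj, hft⟩ := (Finset.all_card_le_biUnion_card_iff_exists_injective t).mp hall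
      refine hω ⟨Equiv.ofBijective f (Finite.injective_iff_bijective.mp hfinj), fun j => ?_⟩
      have hj := hft j
      simp only [htdef, Finset.mem_filter] at hj
      exact hj.2
    push_neg at hhall
    obtain ⟨S, hS⟩ := hhall
    have hk1 : 1 ≤ S.card := by omega
    have hkm : S.card ≤ m := by
      simpa using Finset.card_le_univ S
    obtain ⟨T, hTsub, _, hTcard⟩ :=
      Finset.exists_subsuperset_card_eq (Finset.subset_univ (S.biUnion t))
        (by omega : (S.biUnion t).card ≤ S.card - 1)
        (by simpa using (by omega : S.card - 1 ≤ m))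
    refine Set.mem_iUnion₂.mpr ⟨(S, T), ?_, ?_⟩
    · simp only [hPdef, Finset.mem_filter, Finset.mem_univ, true_and]
      omega
    · simp only [hEdef, Set.mem_iInter]
      rintro ⟨u, c⟩ hq
      rw [Finset.mem_product] at hq
      obtain ⟨hu, hc⟩ := hq
      obtain ⟨j, hjS, hju⟩ := Finset.mem_image.mp hu
      have hcT : c ∉ T := by simpa using hc
      have hcnot : X (u, c) ω ≠ 1 := by
        intro h1
        refine hcT (hTsub (Finset.mem_biUnion.mpr ⟨j, hjS, ?_⟩))
        simp only [htdef, Finset.mem_filter, Finset.mem_univ, true_and, hju]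
        exact h1
      rcases hbin u c ω with h | h
      · simpa using h
      · exact absurd h hcnot
  -- Step 2: per-event bound
  have hbound : ∀ p ∈ P,
      μ (E p) ≤ ENNReal.ofReal (ρ ^ (min p.1.card (m - p.2.card) * m)) := by
    rintro ⟨S, T⟩ hp
    simp only [hPdef, Finset.mem_filter, Finset.mem_univ, true_and] at hp
    set U := S.image s with hUdef
    set I := U ×ˢ Tᶜ with hIdef
    have hEeq : μ (E (S, T)) = ∏ q ∈ I, μ (X q ⁻¹' ({0} : Set ℝ)) := by
      simp only [hEdef]
      exact hind.measure_inter_preimage_eq_mul I (sets := fun _ => ({0} : Set ℝ))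
        (fun i _ => measurableSet_singleton 0)
    have hfac : ∀ q : Fin n × Fin m,
        μ (X q ⁻¹' ({0} : Set ℝ)) ≤ ENNReal.ofReal (1 - hbar) := by
      rintro ⟨u, c⟩
      have hms : MeasurableSet (X (u, c) ⁻¹' ({1} : Set ℝ)) :=
        (hmeas u c) (measurableSet_singleton 1)
      have hsub01 : X (u, c) ⁻¹' ({0} : Set ℝ) ⊆ (X (u, c) ⁻¹' ({1} : Set ℝ))ᶜ := by
        intro ω h0 h1
        simp only [Set.mem_preimage, Set.mem_singleton_iff] at h0 h1
        rw [h0] at h1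
        norm_num at h1
      have hpre : {ω | X (u, c) ω = 1} = X (u, c) ⁻¹' ({1} : Set ℝ) := rfl
      calc μ (X (u, c) ⁻¹' ({0} : Set ℝ)) ≤ μ ((X (u, c) ⁻¹' ({1} : Set ℝ))ᶜ) :=
            measure_mono hsub01
        _ = 1 - μ (X (u, c) ⁻¹' ({1} : Set ℝ)) := by
            rw [measure_compl hms (measure_ne_top μ _), measure_univ]
        _ ≤ 1 - ENNReal.ofReal hbar := by
            apply tsub_le_tsub_left
            rw [← hpre]; exact hlow u c
        _ = ENNReal.ofReal (1 - hbar) := by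
            rw [ENNReal.ofReal_sub 1 hb0.le, ENNReal.ofReal_one]
    have hprod : μ (E (S, T)) ≤ ENNReal.ofReal (1 - hbar) ^ I.card := by
      rw [hEeq, ← Finset.prod_const]
      exact Finset.prod_le_prod' (fun q _ => hfac q)
    have hIcard : I.card = U.card * (m - T.card) := by
      rw [hIdef, Finset.card_product, Finset.card_compl, Fintype.card_fin]
    have hUk : S.card ≤ 2 * U.card := by
      have hcs := Finset.card_eq_sum_card_image s S
      have hle : ∀ u ∈ U, (S.filter (fun j => s j = u)).card ≤ 2 := by
        intro u _
        refine le_trans ?_ (hs u)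
        rw [Set.ncard_eq_toFinset_card']
        apply Finset.card_le_card
        intro j hj
        simp only [Finset.mem_filter] at hj
        simp only [Set.mem_toFinset, Set.mem_setOf_eq]
        exact hj.2
      calc S.card = ∑ u ∈ U, (S.filter (fun j => s j = u)).card := hcs
        _ ≤ ∑ _u ∈ U, 2 := Finset.sum_le_sum hle
        _ = 2 * U.card := by rw [Finset.sum_const, smul_eq_mul, mul_comm]
    have hkm : S.card ≤ m := by simpa using Finset.card_le_univ S
    have hTm : T.card ≤ m := by simpa using Finset.card_le_univ T
    have hexp : min S.card (m - T.card) * m ≤ 4 * I.card := by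
      rw [hIcard]
      set k := S.card
      set b := m - T.card
      have hkb : k + b = m + 1 := by omega
      have h2kb : min k b * m ≤ 2 * (k * b) := by
        rcases le_total k b with h | h
        · rw [min_eq_left h]
          calc k * m ≤ k * (2 * b) := Nat.mul_le_mul_left k (by omega)
            _ = 2 * (k * b) := by ring
        · rw [min_eq_right h]
          calc b * m ≤ b * (2 * k) := Nat.mul_le_mul_left b (by omega)
            _ = 2 * (k * b) := by ring
      calc min k b * m ≤ 2 * (k * b) := h2kb
        _ ≤ 2 * ((2 * U.card) * b) := by
            exact Nat.mul_le_mul_left 2 (Nat.mul_le_mul_right b hUk)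
        _ = 4 * (U.card * b) := by ring
    calc μ (E (S, T)) ≤ ENNReal.ofReal (1 - hbar) ^ I.card := hprod
      _ = ENNReal.ofReal ((1 - hbar) ^ I.card) := (ENNReal.ofReal_pow h1h0 _).symm
      _ ≤ ENNReal.ofReal (ρ ^ (min S.card (m - T.card) * m)) := by
          apply ENNReal.ofReal_le_ofReal
          have h4 : (1 - hbar) ^ I.card = ρ ^ (4 * I.card) := by
            have hρ4 : ρ ^ 4 = 1 - hbar := by
              have : ρ ^ 4 = (ρ ^ 2) ^ 2 := by ring
              rw [this, hρsq, hδsq]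
            rw [pow_mul, hρ4]
          rw [h4]
          exact pow_le_pow_of_le_one hρ0 hρ1.le hexp
  -- Step 3: summation
  have hreal : ∑ p ∈ P, ρ ^ (min p.1.card (m - p.2.card) * m) ≤ r ^ m := by
    have hmaps : ∀ p ∈ P, p.1.card ∈ Finset.Icc 1 m := by
      rintro ⟨S, T⟩ hp
      simp only [hPdef, Finset.mem_filter, Finset.mem_univ, true_and] at hp
      have : S.card ≤ m := by simpa using Finset.card_le_univ S
      simp only [Finset.mem_Icc]
      omega
    rw [← Finset.sum_fiberwise_of_maps_to hmaps
      (fun p => ρ ^ (min p.1.card (m - p.2.card) * m))]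
    have hinner : ∀ k ∈ Finset.Icc 1 m,
        ∑ p ∈ P.filter (fun p => p.1.card = k), ρ ^ (min p.1.card (m - p.2.card) * m)
          ≤ (m:ℝ)^2 * ρ^m := by
      intro k hk
      rw [Finset.mem_Icc] at hk
      obtain ⟨hk1, hkm⟩ := hk
      set a := min k (m - (k - 1)) with hadef
      have ha1 : 1 ≤ a := by
        have : 1 ≤ m - (k - 1) := by omega
        exact le_min hk1 this
      have hterm : ∀ p ∈ P.filter (fun p => p.1.card = k),
          ρ ^ (min p.1.card (m - p.2.card) * m) = ρ ^ (a * m) := by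
        rintro ⟨S, T⟩ hp
        simp only [hPdef, Finset.mem_filter, Finset.mem_univ, true_and] at hp
        obtain ⟨h1, h2⟩ := hp
        have hT : T.card = k - 1 := by omega
        rw [h2, hT]
      rw [Finset.sum_congr rfl hterm, Finset.sum_const, nsmul_eq_mul]
      have hcard : (P.filter (fun p => p.1.card = k)).card ≤ m ^ a * m ^ a := by
        have hss : P.filter (fun p => p.1.card = k) ⊆
            (Finset.powersetCard k Finset.univ) ×ˢ (Finset.powersetCard (k-1) Finset.univ) := by
          rintro ⟨S, T⟩ hp
          simp only [hPdef, Finset.mem_filter, Finset.mem_univ, true_and] at hp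
          obtain ⟨h1, h2⟩ := hp
          rw [Finset.mem_product, Finset.mem_powersetCard, Finset.mem_powersetCard]
          have hT2 : T.card = k - 1 := by omega
          exact ⟨⟨Finset.subset_univ _, h2⟩, ⟨Finset.subset_univ _, hT2⟩⟩
        have := Finset.card_le_card hss
        rw [Finset.card_product, Finset.card_powersetCard, Finset.card_powersetCard,
          Finset.card_univ, Fintype.card_fin] at this
        refine this.trans (Nat.mul_le_mul ?_ ?_)
        · rcases le_total k (m - (k - 1)) with h | h
          · rw [hadef, min_eq_left h]; exact Nat.choose_le_pow m k
          · rw [hadef, min_eq_right h]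
            calc m.choose k = m.choose (m - k) := (Nat.choose_symm hkm).symm
              _ ≤ m ^ (m - k) := Nat.choose_le_pow m (m - k)
              _ ≤ m ^ (m - (k - 1)) := Nat.pow_le_pow_right hm1 (by omega)
        · rcases le_total k (m - (k - 1)) with h | h
          · rw [hadef, min_eq_left h]
            calc m.choose (k - 1) ≤ m ^ (k - 1) := Nat.choose_le_pow m (k - 1)
              _ ≤ m ^ k := Nat.pow_le_pow_right hm1 (by omega)
          · rw [hadef, min_eq_right h]
            calc m.choose (k - 1) = m.choose (m - (k - 1)) :=
                  (Nat.choose_symm (by omega)).symm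
              _ ≤ m ^ (m - (k - 1)) := Nat.choose_le_pow m (m - (k - 1))
      have hcardR : ((P.filter (fun p => p.1.card = k)).card : ℝ) ≤ (m:ℝ) ^ (2 * a) := by
        have : ((P.filter (fun p => p.1.card = k)).card : ℝ) ≤ ((m ^ a * m ^ a : ℕ) : ℝ) := by
          exact_mod_cast hcard
        refine this.trans ?_
        push_cast
        rw [← pow_add]
        apply le_of_eq
        congr 1
        omega
      calc ((P.filter (fun p => p.1.card = k)).card : ℝ) * ρ ^ (a * m)
          ≤ (m:ℝ) ^ (2 * a) * ρ ^ (a * m) := by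
            exact mul_le_mul_of_nonneg_right hcardR (pow_nonneg hρ0 _)
        _ = ((m:ℝ)^2 * ρ^m) ^ a := by
            rw [mul_pow, ← pow_mul, ← pow_mul, mul_comm a m]
        _ ≤ ((m:ℝ)^2 * ρ^m) ^ 1 := by
            apply pow_le_pow_of_le_one (by positivity) h2le ha1
        _ = (m:ℝ)^2 * ρ^m := pow_one _
    calc ∑ k ∈ Finset.Icc 1 m, ∑ p ∈ P.filter (fun p => p.1.card = k),
          ρ ^ (min p.1.card (m - p.2.card) * m)
        ≤ ∑ _k ∈ Finset.Icc 1 m, (m:ℝ)^2 * ρ^m := Finset.sum_le_sum hinner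
      _ = (m:ℝ) * ((m:ℝ)^2 * ρ^m) := by
          rw [Finset.sum_const, Nat.card_Icc, nsmul_eq_mul]
          norm_num
      _ = (m:ℝ)^3 * ρ^m := by ring
      _ ≤ r ^ m := h3le
  calc μ {ω | ¬ ∃ g : Fin m ≃ Fin m, ∀ j, X (s j, g j) ω = 1}
      ≤ μ (⋃ p ∈ P, E p) := measure_mono hsub
    _ ≤ ∑ p ∈ P, μ (E p) := measure_biUnion_finset_le P E
    _ ≤ ∑ p ∈ P, ENNReal.ofReal (ρ ^ (min p.1.card (m - p.2.card) * m)) :=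
        Finset.sum_le_sum hbound
    _ = ENNReal.ofReal (∑ p ∈ P, ρ ^ (min p.1.card (m - p.2.card) * m)) :=
        (ENNReal.ofReal_sum_of_nonneg (fun p _ => pow_nonneg hρ0 _)).symm
    _ ≤ ENNReal.ofReal (r ^ m) := ENNReal.ofReal_le_ofReal hreal
    _ = ENNReal.ofReal ((2 / (1 + δ))⁻¹ ^ m) := by rw [hinv]
end

section
/- Let h̄ ∈ (0,1], let n and m be positive integers, let (X_{u,c})_{u ∈ {1,...,n}, c ∈ {1,...,m}} be a family of mutually independent {0,1}-valued random variables with P(X_{u,c} = 1) = h̄_{u,c} ≥ h̄ for all u, c, and let s : {1,...,m} → {1,...,n} be any map. Let A ⊆ {1,...,m} be a set of slots of cardinality a ≥ 1 such that the image s(A) contains at least ⌈a/2⌉ distinct users. Define the neighborhood Γ(A) = {c ∈ {1,...,m} : X_{s(j),c} = 1 for some j ∈ A}. Then P(|Γ(A)| < a) ≤ C(m, m−a+1) · (1 − h̄)^{(m−a+1)·⌈a/2⌉}, where C(m, k) denotes the binomial coefficient. -/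
open MeasureTheory ProbabilityTheory

/-- Hall-condition union bound used in the proof of Lemma 6: if the set `A` of slots
(of size `a ≥ 1`) refers to at least `⌈a/2⌉` distinct users, then the probability that
its channel neighborhood has fewer than `a` elements is at most
`C(m, m−a+1)·(1−h̄)^{(m−a+1)·⌈a/2⌉}`. -/
theorem stmt_5 (hbar : ℝ) (hhbar : hbar ∈ Set.Ioc (0 : ℝ) 1)
    (n m : ℕ) (hn : 0 < n) (hm : 0 < m)
    (Ω : Type) (_ : MeasurableSpace Ω) (μ : Measure Ω) (hμ : IsProbabilityMeasure μ)
    (X : Fin n × Fin m → Ω → ℝ)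
    (hindep : iIndepFun X μ)
    (hmeas : ∀ u c, Measurable (X (u, c)))
    (hval : ∀ u c ω, X (u, c) ω = 0 ∨ X (u, c) ω = 1)
    (hON : ∀ u c, ENNReal.ofReal hbar ≤ μ {ω | X (u, c) ω = 1})
    (s : Fin m → Fin n) (A : Finset (Fin m)) (a : ℕ) (ha : A.card = a) (ha1 : 1 ≤ a)
    (himage : (a + 1) / 2 ≤ (A.image s).card) :
    μ {ω | Set.ncard {c : Fin m | ∃ j ∈ A, X (s j, c) ω = 1} < a} ≤
      (m.choose (m - a + 1) : ENNReal) *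
        ENNReal.ofReal ((1 - hbar) ^ ((m - a + 1) * ((a + 1) / 2))) := by
  set k := (a + 1) / 2 with hk
  set K := m - a + 1 with hK
  have haM : a ≤ m := by
    have := A.card_le_univ
    simpa [ha] using this
  obtain ⟨U, hUsub, hUcard⟩ := Finset.exists_subset_card_eq himage
  -- step 1: inclusion into a union over channel sets of size K
  have hsub : {ω | Set.ncard {c : Fin m | ∃ j ∈ A, X (s j, c) ω = 1} < a} ⊆
      ⋃ S ∈ Finset.powersetCard K (Finset.univ : Finset (Fin m)),
        ⋂ p ∈ U ×ˢ S, X p ⁻¹' {0} := by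
    intro ω hω
    simp only [Set.mem_setOf_eq] at hω
    classical
    set Γ : Finset (Fin m) :=
      Finset.univ.filter (fun c => ∃ j ∈ A, X (s j, c) ω = 1) with hΓ
    have hset : {c : Fin m | ∃ j ∈ A, X (s j, c) ω = 1} = ↑Γ := by
      ext c; simp [hΓ]
    rw [hset, Set.ncard_coe_finset] at hω
    have hcompl : K ≤ (Finset.univ \ Γ).card := by
      have h1 : (Finset.univ \ Γ).card = m - Γ.card := by
        rw [Finset.card_sdiff_of_subset (Finset.subset_univ _)]
        simp
      have h2 : Γ.card ≤ m := by
        have := Γ.card_le_univ; simpa using this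
      omega
    obtain ⟨S, hSsub, hScard⟩ := Finset.exists_subset_card_eq hcompl
    refine Set.mem_biUnion
      (show S ∈ Finset.powersetCard K (Finset.univ : Finset (Fin m)) from
        Finset.mem_powersetCard.2 ⟨Finset.subset_univ _, hScard⟩)
      (Set.mem_biInter ?_)
    rintro ⟨u, c⟩ hp
    obtain ⟨hu, hc⟩ := Finset.mem_product.1 hp
    obtain ⟨j, hj, hju⟩ := Finset.mem_image.1 (hUsub hu)
    have hcΓ : c ∉ Γ := (Finset.mem_sdiff.1 (hSsub hc)).2
    have hne : X (s j, c) ω ≠ 1 := by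
      intro h1
      exact hcΓ (Finset.mem_filter.2 ⟨Finset.mem_univ _, ⟨j, hj, h1⟩⟩)
    have h0 : X (s j, c) ω = 0 := (hval (s j) c ω).resolve_right hne
    simp only [Set.mem_preimage, Set.mem_singleton_iff]
    simp only at hju
    rw [← hju]
    exact h0
  calc μ {ω | Set.ncard {c : Fin m | ∃ j ∈ A, X (s j, c) ω = 1} < a}
      ≤ μ (⋃ S ∈ Finset.powersetCard K (Finset.univ : Finset (Fin m)),
            ⋂ p ∈ U ×ˢ S, X p ⁻¹' {0}) := measure_mono hsub
    _ ≤ ∑ S ∈ Finset.powersetCard K (Finset.univ : Finset (Fin m)),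
          μ (⋂ p ∈ U ×ˢ S, X p ⁻¹' {0}) := measure_biUnion_finset_le _ _
    _ ≤ ∑ _S ∈ Finset.powersetCard K (Finset.univ : Finset (Fin m)),
          ENNReal.ofReal ((1 - hbar) ^ (K * k)) := by
        refine Finset.sum_le_sum fun S hS => ?_
        have hScard : S.card = K := (Finset.mem_powersetCard.1 hS).2
        have hprod : μ (⋂ p ∈ U ×ˢ S, X p ⁻¹' {0}) =
            ∏ p ∈ U ×ˢ S, μ (X p ⁻¹' {0}) := by
          refine hindep.meas_biInter fun p _ => ?_
          exact ⟨{0}, measurableSet_singleton _, rfl⟩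
        rw [hprod]
        have hfac : ∀ p ∈ U ×ˢ S, μ (X p ⁻¹' {0}) ≤ ENNReal.ofReal (1 - hbar) := by
          rintro ⟨u, c⟩ _
          have hcompl : X (u, c) ⁻¹' {0} = (X (u, c) ⁻¹' {1})ᶜ := by
            ext ω
            simp only [Set.mem_preimage, Set.mem_singleton_iff, Set.mem_compl_iff]
            rcases hval u c ω with h | h <;> simp [h]
          rw [hcompl, prob_compl_eq_one_sub ((hmeas u c) (measurableSet_singleton _))]
          have h1 : ENNReal.ofReal (1 - hbar) = 1 - ENNReal.ofReal hbar := by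
            rw [ENNReal.ofReal_sub _ (le_of_lt hhbar.1), ENNReal.ofReal_one]
          rw [h1]
          exact tsub_le_tsub_left (hON u c) 1
        calc ∏ p ∈ U ×ˢ S, μ (X p ⁻¹' {0})
            ≤ ∏ _p ∈ U ×ˢ S, ENNReal.ofReal (1 - hbar) := Finset.prod_le_prod' hfac
          _ = ENNReal.ofReal (1 - hbar) ^ (K * k) := by
              rw [Finset.prod_const, Finset.card_product, hUcard, hScard, Nat.mul_comm]
          _ = ENNReal.ofReal ((1 - hbar) ^ (K * k)) := by
              rw [ENNReal.ofReal_pow (by linarith [hhbar.2])]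
    _ = (m.choose K : ENNReal) * ENNReal.ofReal ((1 - hbar) ^ (K * k)) := by
        rw [Finset.sum_const, Finset.card_powersetCard, nsmul_eq_mul]
        simp
end

section
/- For every δ ∈ (0,1) there exists M such that for all integers m ≥ M, 2 · Σ_{a=1}^{⌈m/2⌉} C(m, a) · C(m, a−1) · δ^{(m−a+1)·a} ≤ ((1+δ)/2)^m, where C(m, k) denotes the binomial coefficient. -/
/-- Combinatorial estimate concluding Lemma 6: for every `δ ∈ (0,1)` and all
sufficiently large `m`,
`2 Σ_{a=1}^{⌈m/2⌉} C(m,a) C(m,a−1) δ^{(m−a+1)a} ≤ ((1+δ)/2)^m`. -/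
theorem stmt_6 (δ : ℝ) (hδ : δ ∈ Set.Ioo (0 : ℝ) 1) :
    ∃ M : ℕ, ∀ m : ℕ, M ≤ m →
      2 * ∑ a ∈ Finset.Icc 1 ((m + 1) / 2),
          (m.choose a : ℝ) * (m.choose (a - 1) : ℝ) * δ ^ ((m - a + 1) * a) ≤
        ((1 + δ) / 2) ^ m := by
  obtain ⟨hδ0, hδ1⟩ := hδ
  set t : ℝ := (1 + δ) / 2 with ht
  have ht0 : 0 < t := by positivity
  have ht1 : t < 1 := by rw [ht]; linarith
  set s : ℝ := Real.sqrt δ with hs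
  have hs0 : 0 < s := Real.sqrt_pos.mpr hδ0
  have hs2 : s ^ 2 = δ := Real.sq_sqrt hδ0.le
  have hs1 : s < 1 := by nlinarith [hs2]
  have hst : s < t := by nlinarith [sq_nonneg (1 - s)]
  have hu0 : (0 : ℝ) ≤ s / t := by positivity
  have hu1 : s / t < 1 := (div_lt_one ht0).mpr hst
  have hev : ∀ᶠ n : ℕ in Filter.atTop, (n : ℝ) ^ 3 * (s / t) ^ n ≤ s / 2 :=
    (tendsto_pow_const_mul_const_pow_of_lt_one 3 hu0 hu1).eventually
      (eventually_le_nhds (by positivity))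
  obtain ⟨M, hM⟩ := Filter.eventually_atTop.mp hev
  refine ⟨max M 1, fun m hm => ?_⟩
  have hm1 : 1 ≤ m := le_trans (le_max_right M 1) hm
  have hmM : M ≤ m := le_trans (le_max_left M 1) hm
  have hm1R : (1 : ℝ) ≤ (m : ℝ) := by exact_mod_cast hm1
  -- key estimate : 2 m^3 δ^(m/2) ≤ t^m
  have hsm : s ^ m = (s / t) ^ m * t ^ m := by
    rw [div_pow, div_mul_cancel₀]
    positivity
  have hkey1 : (m : ℝ) ^ 3 * s ^ m ≤ s / 2 * t ^ m := by
    rw [hsm, ← mul_assoc]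
    exact mul_le_mul_of_nonneg_right (hM m hmM) (by positivity)
  have hδpow : δ ^ (m / 2) ≤ s ^ (m - 1) := by
    have : δ ^ (m / 2) = s ^ (2 * (m / 2)) := by
      rw [pow_mul, hs2]
    rw [this]
    exact pow_le_pow_of_le_one hs0.le hs1.le (by omega)
  have hkey : 2 * (m : ℝ) ^ 3 * δ ^ (m / 2) ≤ t ^ m := by
    have h1 : 2 * (m : ℝ) ^ 3 * s ^ (m - 1) ≤ t ^ m := by
      have hsm1 : s ^ (m - 1) * s = s ^ m := by
        rw [← pow_succ]
        congr 1
        omega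
      have h2 : 2 * (m : ℝ) ^ 3 * s ^ (m - 1) * s ≤ t ^ m * s := by
        rw [mul_assoc, hsm1]
        nlinarith [hkey1]
      exact le_of_mul_le_mul_right (by linarith [h2]) hs0
    calc 2 * (m : ℝ) ^ 3 * δ ^ (m / 2) ≤ 2 * (m : ℝ) ^ 3 * s ^ (m - 1) := by
          apply mul_le_mul_of_nonneg_left hδpow (by positivity)
      _ ≤ t ^ m := h1
  set x : ℝ := (m : ℝ) ^ 2 * δ ^ (m / 2) with hx
  have hx0 : 0 ≤ x := by positivity
  have htm1 : t ^ m < 1 := pow_lt_one₀ ht0.le ht1 (by omega)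
  have hx1 : x ≤ 1 := by nlinarith [hkey, pow_le_pow_left₀ hδ0.le (le_refl δ) 1]
  have hterm : ∀ a ∈ Finset.Icc 1 ((m + 1) / 2),
      (m.choose a : ℝ) * (m.choose (a - 1) : ℝ) * δ ^ ((m - a + 1) * a) ≤ x ^ a := by
    intro a ha
    rw [Finset.mem_Icc] at ha
    obtain ⟨ha1, ha2⟩ := ha
    have hc1 : (m.choose a : ℝ) ≤ (m : ℝ) ^ a := by
      exact_mod_cast Nat.cast_le.mpr (Nat.choose_le_pow m a)
    have hc2 : (m.choose (a - 1) : ℝ) ≤ (m : ℝ) ^ a := by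
      calc (m.choose (a - 1) : ℝ) ≤ (m : ℝ) ^ (a - 1) := by
            exact_mod_cast Nat.cast_le.mpr (Nat.choose_le_pow m (a - 1))
        _ ≤ (m : ℝ) ^ a := pow_le_pow_right₀ hm1R (by omega)
    have hd : δ ^ ((m - a + 1) * a) ≤ (δ ^ (m / 2)) ^ a := by
      rw [← pow_mul]
      exact pow_le_pow_of_le_one hδ0.le hδ1.le
        (Nat.mul_le_mul_right a (by omega))
    have hxa : x ^ a = (m : ℝ) ^ a * (m : ℝ) ^ a * (δ ^ (m / 2)) ^ a := by
      rw [hx, mul_pow, ← pow_mul]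
      ring
    rw [hxa]
    have hcc : (0 : ℝ) ≤ (m.choose a : ℝ) * (m.choose (a - 1) : ℝ) := by positivity
    calc (m.choose a : ℝ) * (m.choose (a - 1) : ℝ) * δ ^ ((m - a + 1) * a)
        ≤ (m.choose a : ℝ) * (m.choose (a - 1) : ℝ) * (δ ^ (m / 2)) ^ a :=
          mul_le_mul_of_nonneg_left hd hcc
      _ ≤ (m : ℝ) ^ a * (m : ℝ) ^ a * (δ ^ (m / 2)) ^ a := by
          apply mul_le_mul_of_nonneg_right _ (by positivity)
          exact mul_le_mul hc1 hc2 (by positivity) (by positivity)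
  have hxa_le : ∀ a ∈ Finset.Icc 1 ((m + 1) / 2), x ^ a ≤ x := by
    intro a ha
    rw [Finset.mem_Icc] at ha
    calc x ^ a ≤ x ^ 1 := pow_le_pow_of_le_one hx0 hx1 ha.1
      _ = x := pow_one x
  have hsum : ∑ a ∈ Finset.Icc 1 ((m + 1) / 2),
      (m.choose a : ℝ) * (m.choose (a - 1) : ℝ) * δ ^ ((m - a + 1) * a)
      ≤ (m : ℝ) * x := by
    calc ∑ a ∈ Finset.Icc 1 ((m + 1) / 2),
        (m.choose a : ℝ) * (m.choose (a - 1) : ℝ) * δ ^ ((m - a + 1) * a)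
        ≤ ∑ a ∈ Finset.Icc 1 ((m + 1) / 2), x ^ a := Finset.sum_le_sum hterm
      _ ≤ ∑ _a ∈ Finset.Icc 1 ((m + 1) / 2), x := Finset.sum_le_sum hxa_le
      _ = ((m + 1) / 2 : ℕ) * x := by
          rw [Finset.sum_const, Nat.card_Icc]
          simp [nsmul_eq_mul]
      _ ≤ (m : ℝ) * x := by
          apply mul_le_mul_of_nonneg_right _ hx0
          exact_mod_cast Nat.cast_le.mpr (by omega : (m + 1) / 2 ≤ m)
  calc 2 * ∑ a ∈ Finset.Icc 1 ((m + 1) / 2),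
      (m.choose a : ℝ) * (m.choose (a - 1) : ℝ) * δ ^ ((m - a + 1) * a)
      ≤ 2 * ((m : ℝ) * x) := by linarith
    _ ≤ 2 * (m : ℝ) ^ 3 * δ ^ (m / 2) := by
        rw [hx]; nlinarith [pow_pos hδ0 (m / 2), hm1R]
    _ ≤ t ^ m := hkey
end

section
/- Let s, f : ℕ → ℤ be sequences with s(t) ≥ 0 and f(t) ∈ {0,1} for all t, let x : ℕ → ℤ satisfy x(0) ≥ 0 and the recursion x(t+1) = max(x(t) + s(t) − f(t), 0) for all t. Suppose the Cesàro limits (1/T) Σ_{t=0}^{T−1} f(t) → p and (1/T) Σ_{t=0}^{T−1} s(t) → σ hold as T → ∞ for reals p and σ. Then liminf_{T→∞} (1/T) · |{t < T : x(t) + s(t) − f(t) < 0}| ≥ p − σ. -/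
open Filter

/-- Lower-bound direction of Lemma 1 (pathwise form): if the consumption process has
Cesàro mean `p` and the service process has Cesàro mean `σ`, then the asymptotic
frequency of buffering pause is at least `p − σ`. -/
theorem stmt_8 (s f x : ℕ → ℤ)
    (hs : ∀ t, 0 ≤ s t) (hf : ∀ t, f t = 0 ∨ f t = 1)
    (hx0 : 0 ≤ x 0) (hx : ∀ t, x (t + 1) = max (x t + s t - f t) 0)
    (p σ : ℝ)
    (hp : Tendsto (fun T : ℕ => (∑ t ∈ Finset.range T, (f t : ℝ)) / T) atTop (nhds p))
    (hσ : Tendsto (fun T : ℕ => (∑ t ∈ Finset.range T, (s t : ℝ)) / T) atTop (nhds σ)) :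
    p - σ ≤
      atTop.liminf (fun T : ℕ =>
        (((Finset.range T).filter (fun t => x t + s t - f t < 0)).card : ℝ) / T) := by
  -- nonnegativity of x
  have hxnn : ∀ t, 0 ≤ x t := by
    intro t
    cases t with
    | zero => exact hx0
    | succ n => rw [hx n]; exact le_max_right _ _
  -- key identity
  have key : ∀ T : ℕ, x T = x 0 + (∑ t ∈ Finset.range T, (s t - f t)) +
      (((Finset.range T).filter (fun t => x t + s t - f t < 0)).card : ℤ) := by
    intro T
    induction T with
    | zero => simp
    | succ T ih =>
      rw [Finset.sum_range_succ, Finset.range_add_one, Finset.filter_insert]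
      by_cases h : x T + s T - f T < 0
      · have hfe : x T + s T - f T = -1 := by
          have := hxnn T; have := hs T; rcases hf T with h1 | h1 <;> omega
        rw [if_pos h, Finset.card_insert_of_notMem (by simp), hx T,
          max_eq_right (le_of_lt h)]
        push_cast
        omega
      · rw [if_neg h, hx T, max_eq_left (not_lt.mp h)]
        omega
  -- pointwise bound
  have hbound : ∀ T : ℕ, 1 ≤ T →
      (∑ t ∈ Finset.range T, (f t : ℝ)) / T - (∑ t ∈ Finset.range T, (s t : ℝ)) / T
        - (x 0 : ℝ) / T ≤
      (((Finset.range T).filter (fun t => x t + s t - f t < 0)).card : ℝ) / T := by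
    intro T hT
    have hTpos : (0 : ℝ) < T := by exact_mod_cast hT
    rw [div_sub_div_same, div_sub_div_same, div_le_div_iff_of_pos_right hTpos]
    have hkey := key T
    have hx' := hxnn T
    have hZ : (∑ t ∈ Finset.range T, (f t : ℤ)) - (∑ t ∈ Finset.range T, (s t : ℤ))
        - x 0 ≤ (((Finset.range T).filter (fun t => x t + s t - f t < 0)).card : ℤ) := by
      have hsum : (∑ t ∈ Finset.range T, (s t - f t)) =
          (∑ t ∈ Finset.range T, s t) - (∑ t ∈ Finset.range T, f t) :=
        Finset.sum_sub_distrib _ _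
      omega
    exact_mod_cast hZ
  -- the lower-bound sequence tends to p - σ
  have hx0T : Tendsto (fun T : ℕ => (x 0 : ℝ) / T) atTop (nhds 0) :=
    tendsto_const_nhds.div_atTop tendsto_natCast_atTop_atTop
  have hlim : Tendsto (fun T : ℕ =>
      (∑ t ∈ Finset.range T, (f t : ℝ)) / T - (∑ t ∈ Finset.range T, (s t : ℝ)) / T
        - (x 0 : ℝ) / T) atTop (nhds (p - σ)) := by
    have := (hp.sub hσ).sub hx0T
    simpa using this
  have h1 : (p - σ : ℝ) = atTop.liminf (fun T : ℕ =>
      (∑ t ∈ Finset.range T, (f t : ℝ)) / T - (∑ t ∈ Finset.range T, (s t : ℝ)) / T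
        - (x 0 : ℝ) / T) := hlim.liminf_eq.symm
  rw [h1]
  apply liminf_le_liminf
  · filter_upwards [eventually_ge_atTop 1] with T hT using hbound T hT
  · exact hlim.isBoundedUnder_ge
  · refine isCoboundedUnder_ge_of_le atTop (x := 1) fun T => ?_
    rcases Nat.eq_zero_or_pos T with h | h
    · simp [h]
    · have hTpos : (0 : ℝ) < T := by exact_mod_cast h
      rw [div_le_one hTpos]
      exact_mod_cast (Finset.card_filter_le _ _).trans (Finset.card_range T).le
end

section
/- Let n and m be positive integers and let α_1, ..., α_n be reals with 0 ≤ α_i ≤ 1 for all i and Σ_{i=1}^n α_i ≤ m. Define the prefix sums c_0 = 0 and c_i = α_1 + ... + α_i, and for each user i ∈ {1,...,n} and each slot j ∈ {1,...,m} define the overlap ℓ(i,j) = max(0, min(c_i, j) − max(c_{i−1}, j−1)). Then: (a) for every user i, the number of slots j with ℓ(i,j) > 0 is at most 2; and (b) for every user i, Σ_{j=1}^m ℓ(i,j) = α_i. -/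
lemma stmt14_aux (a b x y : ℝ) (hab : a ≤ b) (hxy : x ≤ y) :
    max 0 (min b y - max a x) = max a (min b y) - max a (min b x) := by
  simp only [max_def, min_def]
  split_ifs <;> linarith

/-- Deterministic content of Lemma 5 (SelectUsers): user `i`'s mass `α_i` occupies the
subinterval `[c_{i−1}, c_i]` of `[0, m]`, and the overlap
`ℓ(i,j) = max(0, min(c_i, j) − max(c_{i−1}, j−1))` with slot `[j−1, j]` satisfies:
(a) each user overlaps at most two slots positively, and (b) the overlaps of user `i`
sum to `α_i`. -/
theorem stmt_14 (n m : ℕ) (hn : 0 < n) (hm : 0 < m)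
    (α : Fin n → ℝ) (hα : ∀ i, 0 ≤ α i ∧ α i ≤ 1)
    (hsum : ∑ i, α i ≤ (m : ℝ))
    (c : ℕ → ℝ)
    (hc : ∀ k, c k = ∑ i ∈ Finset.univ.filter (fun i : Fin n => (i : ℕ) < k), α i)
    (ℓ : Fin n → ℕ → ℝ)
    (hℓ : ∀ (i : Fin n), ∀ j ∈ Finset.Icc 1 m,
      ℓ i j = max 0 (min (c ((i : ℕ) + 1)) (j : ℝ) - max (c (i : ℕ)) ((j : ℝ) - 1))) :
    (∀ i : Fin n, {j : ℕ | j ∈ Finset.Icc 1 m ∧ 0 < ℓ i j}.ncard ≤ 2) ∧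
    (∀ i : Fin n, ∑ j ∈ Finset.Icc 1 m, ℓ i j = α i) := by
  -- basic facts about c
  have hstep : ∀ i : Fin n, c ((i : ℕ) + 1) = c (i : ℕ) + α i := by
    intro i
    rw [hc, hc]
    have hins : Finset.univ.filter (fun i' : Fin n => (i' : ℕ) < (i : ℕ) + 1)
        = insert i (Finset.univ.filter (fun i' : Fin n => (i' : ℕ) < (i : ℕ))) := by
      ext x
      simp only [Finset.mem_filter, Finset.mem_insert, Finset.mem_univ, true_and,
        Nat.lt_succ_iff_lt_or_eq]
      constructor
      · rintro (h | h)
        · exact Or.inr h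
        · exact Or.inl (Fin.ext h)
      · rintro (h | h)
        · exact Or.inr (by rw [h])
        · exact Or.inl h
    rw [hins, Finset.sum_insert (by simp)]
    ring
  have h0 : ∀ i : Fin n, 0 ≤ c (i : ℕ) := by
    intro i
    rw [hc]
    exact Finset.sum_nonneg fun i' _ => (hα i').1
  have hbm : ∀ i : Fin n, c ((i : ℕ) + 1) ≤ (m : ℝ) := by
    intro i
    rw [hc]
    refine le_trans ?_ hsum
    exact Finset.sum_le_sum_of_subset_of_nonneg (Finset.filter_subset _ _)
      (fun i' _ _ => (hα i').1)
  constructor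
  · -- part (a)
    intro i
    set a := c (i : ℕ) with ha
    set b := c ((i : ℕ) + 1) with hb
    have hab : a ≤ b := by rw [ha, hb, hstep i]; linarith [(hα i).1]
    have hba : b ≤ a + 1 := by rw [ha, hb, hstep i]; linarith [(hα i).2]
    have hsub : {j : ℕ | j ∈ Finset.Icc 1 m ∧ 0 < ℓ i j}
        ⊆ {(⌊a⌋).toNat + 1, (⌊a⌋).toNat + 2} := by
      rintro j ⟨hj, hpos⟩
      rw [hℓ i j hj] at hpos
      have hpos' : 0 < min b (j : ℝ) - max a ((j : ℝ) - 1) := by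
        by_contra h
        push_neg at h
        rw [max_eq_left h] at hpos
        exact lt_irrefl 0 hpos
      have h1 : a < (j : ℝ) := by
        have := le_max_left a ((j : ℝ) - 1)
        have := min_le_right b (j : ℝ)
        linarith
      have h2 : (j : ℝ) < a + 2 := by
        have := le_max_right a ((j : ℝ) - 1)
        have := min_le_left b (j : ℝ)
        linarith
      have hfl : 0 ≤ ⌊a⌋ := Int.floor_nonneg.mpr (h0 i)
      have hlo : ⌊a⌋ < (j : ℤ) := by
        have h : ((⌊a⌋ : ℤ) : ℝ) < ((j : ℤ) : ℝ) := by
          push_cast; linarith [Int.floor_le a]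
        exact_mod_cast h
      have hhi : (j : ℤ) < ⌊a⌋ + 3 := by
        have h : ((j : ℤ) : ℝ) < ((⌊a⌋ + 3 : ℤ) : ℝ) := by
          push_cast; linarith [Int.lt_floor_add_one a]
        exact_mod_cast h
      simp only [Set.mem_insert_iff, Set.mem_singleton_iff]
      omega
    calc {j : ℕ | j ∈ Finset.Icc 1 m ∧ 0 < ℓ i j}.ncard
        ≤ ({(⌊a⌋).toNat + 1, (⌊a⌋).toNat + 2} : Set ℕ).ncard :=
          Set.ncard_le_ncard hsub (Set.toFinite _)
      _ ≤ 2 := by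
          refine le_trans (Set.ncard_insert_le _ _) ?_
          simp
  · -- part (b)
    intro i
    set a := c (i : ℕ) with ha
    set b := c ((i : ℕ) + 1) with hb
    have hab : a ≤ b := by rw [ha, hb, hstep i]; linarith [(hα i).1]
    set F : ℕ → ℝ := fun k => max a (min b (k : ℝ)) with hF
    have key : ∀ j ∈ Finset.Icc 1 m, ℓ i j = F j - F (j - 1) := by
      intro j hj
      have hj1 : 1 ≤ j := (Finset.mem_Icc.mp hj).1
      rw [hℓ i j hj, stmt14_aux a b ((j : ℝ) - 1) (j : ℝ) hab (by linarith)]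
      have : ((j - 1 : ℕ) : ℝ) = (j : ℝ) - 1 := by
        push_cast [Nat.cast_sub hj1]; ring
      simp [hF, this]
    rw [Finset.sum_congr rfl key]
    have hIcc : ∑ j ∈ Finset.Icc 1 m, (F j - F (j - 1))
        = ∑ k ∈ Finset.range m, (F (k + 1) - F k) := by
      rw [Finset.range_eq_Ico, show Finset.Icc 1 m = Finset.Ico 1 (m + 1) from
        (Finset.Ico_add_one_right_eq_Icc 1 m).symm]
      rw [Finset.sum_Ico_eq_sum_range]
      simp [add_comm]
    rw [hIcc, Finset.sum_range_sub]
    have hF0 : F 0 = a := by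
      simp only [hF, Nat.cast_zero, min_def, max_def]
      split_ifs <;> first | rfl | linarith [h0 i, hstep i, (hα i).1]
    have hFm : F m = b := by
      have h1 : b ≤ (m : ℝ) := hbm i
      simp only [hF]
      rw [min_eq_left h1, max_eq_right hab]
    rw [hF0, hFm, hb, ha, hstep i]
    ring
end
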